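/- Let k be a field and R = RCFM(k), with A the shift matrix. Then R = R(I−Aᵗ) + A R + k·E₀₀ as k-vector spaces, and the quotient R/(R(I−Aᵗ) + AR) is one-dimensional, spanned by the class of the matrix unit E₀₀, via the linear functional sending a matrix R' to ∑_{j∈ℕ} r'_{0j}. -/
import Mathlib


/-- A matrix is row-column finite if every row and every column has finitely many
nonzero entries. -/
def RCF {k : Type*} [Field k] (M : ℕ → ℕ → k) : Prop :=
  (∀ i, {j | M i j ≠ 0}.Finite) ∧ (∀ j, {i | M i j ≠ 0}.Finite)

/-- The shift matrix `A` over `k`: `a_{i+1,i} = 1` and all other entries `0`. -/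
def shiftA (k : Type*) [Field k] : ℕ → ℕ → k := fun i j => if i = j + 1 then 1 else 0

/-- The identity `ℕ×ℕ` matrix over `k`. -/
def idMat (k : Type*) [Field k] : ℕ → ℕ → k := fun i j => if i = j then 1 else 0

/-- Transpose of an `ℕ×ℕ` matrix. -/
def matTranspose {k : Type*} [Field k] (M : ℕ → ℕ → k) : ℕ → ℕ → k := fun i j => M j i

/-- The matrix unit `E₀₀`. -/
def matE00 (k : Type*) [Field k] : ℕ → ℕ → k := fun i j => if i = 0 ∧ j = 0 then 1 else 0

/-- Product of `ℕ×ℕ` matrices, defined entrywise by the (finite) sums. -/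
noncomputable def matMul {k : Type*} [Field k] (M N : ℕ → ℕ → k) : ℕ → ℕ → k :=
  fun i j => ∑ᶠ l, M i l * N l j

section aux
variable {k : Type*} [Field k]

lemma matMul_shiftA_zero (Y : ℕ → ℕ → k) (j : ℕ) :
    matMul (shiftA k) Y 0 j = 0 := by
  simp only [matMul]
  refine finsum_eq_zero_of_forall_eq_zero fun l => ?_
  simp [shiftA]

lemma matMul_shiftA_succ (Y : ℕ → ℕ → k) (n j : ℕ) :
    matMul (shiftA k) Y (n + 1) j = Y n j := by
  simp only [matMul]
  rw [finsum_eq_single _ n]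
  · simp [shiftA]
  · intro l hl
    simp only [shiftA]
    rw [if_neg (by omega)]
    ring

lemma matMul_XAt_zero (X : ℕ → ℕ → k) (i : ℕ) :
    matMul X (matTranspose (shiftA k)) i 0 = 0 := by
  simp only [matMul]
  refine finsum_eq_zero_of_forall_eq_zero fun l => ?_
  simp [matTranspose, shiftA]

lemma matMul_XAt_succ (X : ℕ → ℕ → k) (i m : ℕ) :
    matMul X (matTranspose (shiftA k)) i (m + 1) = X i m := by
  simp only [matMul]
  rw [finsum_eq_single _ m]
  · simp [matTranspose, shiftA]
  · intro l hl
    simp only [matTranspose, shiftA]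
    rw [if_neg (by omega)]
    ring

lemma matMul_idMat (X : ℕ → ℕ → k) (i j : ℕ) : matMul X (idMat k) i j = X i j := by
  simp only [matMul]
  rw [finsum_eq_single _ j]
  · simp [idMat]
  · intro l hl
    simp only [idMat]
    rw [if_neg hl]
    ring

lemma matMul_IA_apply (X : ℕ → ℕ → k) (i j : ℕ) :
    matMul X (idMat k - matTranspose (shiftA k)) i j
      = matMul X (idMat k) i j - matMul X (matTranspose (shiftA k)) i j := by
  simp only [matMul, Pi.sub_apply]
  have h1 : (Function.support fun l => X i l * idMat k l j).Finite := by
    apply Set.Finite.subset (Set.finite_singleton j)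
    intro l hl
    simp only [Function.mem_support] at hl
    simp only [Set.mem_singleton_iff]
    by_contra hlj
    apply hl
    simp only [idMat]
    rw [if_neg hlj]; ring
  have h2 : (Function.support fun l => X i l * matTranspose (shiftA k) l j).Finite := by
    cases j with
    | zero =>
        apply Set.Finite.subset (Set.finite_empty)
        intro l hl
        simp only [Function.mem_support] at hl
        exact hl (by simp [matTranspose, shiftA])
    | succ m =>
        apply Set.Finite.subset (Set.finite_singleton m)
        intro l hl
        simp only [Function.mem_support] at hl
        simp only [Set.mem_singleton_iff]
        by_contra hlm
        apply hl
        simp only [matTranspose, shiftA]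
        rw [if_neg (by omega)]
        ring
  have : ∀ l, X i l * ((idMat k l j) - matTranspose (shiftA k) l j)
      = X i l * idMat k l j - X i l * matTranspose (shiftA k) l j := fun l => mul_sub _ _ _
  rw [finsum_congr this, finsum_sub_distrib h1 h2]

lemma matMul_IA_zero (X : ℕ → ℕ → k) (i : ℕ) :
    matMul X (idMat k - matTranspose (shiftA k)) i 0 = X i 0 := by
  rw [matMul_IA_apply, matMul_idMat, matMul_XAt_zero, sub_zero]

lemma matMul_IA_succ (X : ℕ → ℕ → k) (i m : ℕ) :
    matMul X (idMat k - matTranspose (shiftA k)) i (m + 1) = X i (m + 1) - X i m := by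
  rw [matMul_IA_apply, matMul_idMat, matMul_XAt_succ]

lemma key (P : ℕ → ℕ → k) (hP : RCF P) :
    (∃ X Y : ℕ → ℕ → k, RCF X ∧ RCF Y ∧
        P = matMul X (idMat k - matTranspose (shiftA k)) + matMul (shiftA k) Y) ↔
      (∑ᶠ j, P 0 j) = 0 := by
  constructor
  · rintro ⟨X, Y, hX, hY, rfl⟩
    obtain ⟨N, hN⟩ := (hX.1 0).toFinset.exists_nat_subset_range
    have hXz : ∀ j, N ≤ j → X 0 j = 0 := by
      intro j hj
      by_contra h
      have : j ∈ Finset.range N := hN (by simpa using h)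
      simp at this; omega
    have hsupp : (Function.support fun j =>
        (matMul X (idMat k - matTranspose (shiftA k)) + matMul (shiftA k) Y) 0 j)
        ⊆ ↑(Finset.range (N + 1)) := by
      intro j hj
      simp only [Function.mem_support, Pi.add_apply, matMul_shiftA_zero, add_zero] at hj
      simp only [Finset.coe_range, Set.mem_Iio]
      by_contra hjN
      push_neg at hjN
      apply hj
      cases j with
      | zero => omega
      | succ m =>
          rw [matMul_IA_succ, hXz _ (by omega), hXz _ (by omega), sub_self]
    rw [finsum_eq_finset_sum_of_support_subset _ hsupp]
    have heq : ∀ j ∈ Finset.range (N + 1),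
        (matMul X (idMat k - matTranspose (shiftA k)) + matMul (shiftA k) Y) 0 j
          = matMul X (idMat k - matTranspose (shiftA k)) 0 j := by
      intro j _
      simp [matMul_shiftA_zero]
    rw [Finset.sum_congr rfl heq, Finset.sum_range_succ']
    have heq2 : ∀ i ∈ Finset.range N,
        matMul X (idMat k - matTranspose (shiftA k)) 0 (i + 1) = X 0 (i + 1) - X 0 i := by
      intro i _; rw [matMul_IA_succ]
    rw [Finset.sum_congr rfl heq2, Finset.sum_range_sub, matMul_IA_zero, hXz N le_rfl]
    ring
  · intro h
    obtain ⟨N, hN⟩ := (hP.1 0).toFinset.exists_nat_subset_range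
    have hPz : ∀ j, N ≤ j → P 0 j = 0 := by
      intro j hj
      by_contra hc
      have : j ∈ Finset.range N := hN (by simpa using hc)
      simp at this; omega
    have hsum : ∑ l ∈ Finset.range N, P 0 l = 0 := by
      rw [← h, finsum_eq_finset_sum_of_support_subset]
      intro j hj
      simp only [Function.mem_support] at hj
      simp only [Finset.coe_range, Set.mem_Iio]
      by_contra hc
      exact hj (hPz j (by omega))
    have hSz : ∀ j, N ≤ j + 1 → ∑ l ∈ Finset.range (j + 1), P 0 l = 0 := by
      intro j hj
      rw [← Finset.sum_subset (Finset.range_subset_range.2 hj) (fun x _ hx => hPz x (by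
        simp at hx ⊢; omega))]
      exact hsum
    refine ⟨fun i j => if i = 0 then ∑ l ∈ Finset.range (j + 1), P 0 l else 0,
      fun i j => P (i + 1) j, ?_, ?_, ?_⟩
    · constructor
      · intro i
        cases i with
        | zero =>
            apply Set.Finite.subset (Set.finite_Iio N)
            intro j hj
            simp only [Set.mem_setOf_eq, if_pos rfl] at hj
            simp only [Set.mem_Iio]
            by_contra hc
            exact hj (hSz j (by omega))
        | succ n => simp
      · intro j
        apply Set.Finite.subset (Set.finite_singleton 0)
        intro i hi
        simp only [Set.mem_setOf_eq] at hi
        simp only [Set.mem_singleton_iff]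
        by_contra hc
        rw [if_neg hc] at hi
        exact hi rfl
    · constructor
      · intro i; exact hP.1 (i + 1)
      · intro j
        have : {i | P (i + 1) j ≠ 0} = (fun i => i + 1) ⁻¹' {i | P i j ≠ 0} := rfl
        rw [this]
        exact (hP.2 j).preimage (Set.injOn_of_injective (fun a b hab => by omega))
    · funext i j
      simp only [Pi.add_apply]
      cases i with
      | zero =>
          rw [matMul_shiftA_zero, add_zero]
          cases j with
          | zero => rw [matMul_IA_zero]; simp
          | succ m =>
              rw [matMul_IA_succ]
              simp [Finset.sum_range_succ]
      | succ n =>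
          rw [matMul_shiftA_succ]
          cases j with
          | zero => rw [matMul_IA_zero]; simp
          | succ m => rw [matMul_IA_succ]; simp


end aux

/-- `R = R(I−Aᵗ) + AR + k·E₀₀` and the quotient `R/(R(I−Aᵗ)+AR)` is one-dimensional,
spanned by the class of `E₀₀`, via the functional `R' ↦ ∑_j r'_{0j}`: a row-column-finite
matrix lies in `R(I−Aᵗ) + AR` exactly when the sum of its `0`-th row vanishes. -/
theorem decomposition_E00 (k : Type*) [Field k] :
    (∀ P : ℕ → ℕ → k, RCF P →
      ∃ (X Y : ℕ → ℕ → k) (c : k), RCF X ∧ RCF Y ∧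
        P = matMul X (idMat k - matTranspose (shiftA k)) + matMul (shiftA k) Y
              + c • matE00 k) ∧
    (∀ P : ℕ → ℕ → k, RCF P →
      ((∃ X Y : ℕ → ℕ → k, RCF X ∧ RCF Y ∧
          P = matMul X (idMat k - matTranspose (shiftA k)) + matMul (shiftA k) Y) ↔
        (∑ᶠ j, P 0 j) = 0)) := by
  refine ⟨?_, fun P hP => key P hP⟩
  intro P hP
  set c : k := ∑ᶠ j, P 0 j with hc
  set P' : ℕ → ℕ → k := P - c • matE00 k with hP'
  have hE : ∀ i j : ℕ, ¬(i = 0 ∧ j = 0) → matE00 k i j = 0 := by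
    intro i j hij
    simp only [matE00]
    rw [if_neg hij]
  have hP'RCF : RCF P' := by
    constructor
    · intro i
      apply Set.Finite.subset ((hP.1 i).union (Set.finite_singleton 0))
      intro j hj
      simp only [Set.mem_setOf_eq, hP', Pi.sub_apply, Pi.smul_apply, smul_eq_mul] at hj
      by_contra hc2
      simp only [Set.mem_union, Set.mem_setOf_eq, Set.mem_singleton_iff, not_or,
        not_not] at hc2
      apply hj
      rw [hc2.1, hE i j (fun hij => hc2.2 hij.2), mul_zero, sub_zero]
    · intro j
      apply Set.Finite.subset ((hP.2 j).union (Set.finite_singleton 0))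
      intro i hi
      simp only [Set.mem_setOf_eq, hP', Pi.sub_apply, Pi.smul_apply, smul_eq_mul] at hi
      by_contra hc2
      simp only [Set.mem_union, Set.mem_setOf_eq, Set.mem_singleton_iff, not_or,
        not_not] at hc2
      apply hi
      rw [hc2.1, hE i j (fun hij => hc2.2 hij.1), mul_zero, sub_zero]
  have hsum0 : (∑ᶠ j, P' 0 j) = 0 := by
    have hcE : (Function.support fun j => c * matE00 k 0 j).Finite := by
      apply Set.Finite.subset (Set.finite_singleton 0)
      intro j hj
      simp only [Function.mem_support] at hj
      simp only [Set.mem_singleton_iff]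
      by_contra hc2
      exact hj (by rw [hE 0 j (fun hij => hc2 hij.2), mul_zero])
    have hPs : (Function.support fun j => P 0 j).Finite := hP.1 0
    have hpt : ∀ j, P' 0 j = P 0 j - c * matE00 k 0 j := fun j => rfl
    rw [finsum_congr hpt, finsum_sub_distrib hPs hcE, ← hc]
    have : (∑ᶠ j, c * matE00 k 0 j) = c := by
      rw [finsum_eq_single _ 0]
      · simp [matE00]
      · intro l hl
        rw [hE 0 l (fun hij => hl hij.2), mul_zero]
    rw [this, sub_self]
  obtain ⟨X, Y, hX, hY, hEq⟩ := (key P' hP'RCF).2 hsum0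
  refine ⟨X, Y, c, hX, hY, ?_⟩
  rw [← hEq, hP']
  abel
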